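/- For all natural n ≥ 2 and all ε ∈ [0, π/2], (∫_0^{π/2+ε} sin^n t dt) / (∫_0^π sin^n t dt) ≥ 1 − √(π/8) · exp(−ε²(n−1)/2). -/

import Mathlib

open Real MeasureTheory Set intervalIntegral

lemma cos_le_exp_aux {x : ℝ} (hx : x ∈ Set.Icc (0:ℝ) (π/2)) :
    Real.cos x ≤ Real.exp (-(x^2/2)) := by
  have key : AntitoneOn (fun x => Real.cos x * Real.exp (x^2/2)) (Set.Icc 0 (π/2)) := by
    have hd : ∀ y : ℝ, HasDerivAt (fun x => Real.cos x * Real.exp (x^2/2))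
        (-Real.sin y * Real.exp (y^2/2) + Real.cos y * (y * Real.exp (y^2/2))) y := by
      intro y
      have h1 : HasDerivAt (fun x : ℝ => x^2/2) y y := by
        have := ((hasDerivAt_pow 2 y).div_const 2)
        simpa using this
      have h2 := HasDerivAt.exp h1
      exact ((Real.hasDerivAt_cos y).mul h2).congr_deriv (by ring)
    apply antitoneOn_of_deriv_nonpos (convex_Icc _ _)
    · exact (Real.continuous_cos.mul (Real.continuous_exp.comp (by continuity))).continuousOn
    · intro y hy
      exact ((hd y).differentiableAt).differentiableWithinAt
    · intro y hy
      rw [interior_Icc] at hy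
      rw [(hd y).deriv]
      have hy0 : 0 < y := hy.1
      have hy2 : y < π/2 := hy.2
      have htan : y < Real.tan y := Real.lt_tan hy0 hy2
      have hcos : 0 < Real.cos y := Real.cos_pos_of_mem_Ioo ⟨by linarith [pi_div_two_pos], hy2⟩
      rw [Real.tan_eq_sin_div_cos, lt_div_iff₀ hcos] at htan
      nlinarith [Real.exp_pos (y^2/2)]
  have h0 : (0:ℝ) ∈ Set.Icc (0:ℝ) (π/2) := ⟨le_rfl, pi_div_two_pos.le⟩
  have := key h0 hx hx.1
  simp only [Real.cos_zero, ne_eq, OfNat.ofNat_ne_zero, not_false_eq_true, zero_pow,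
    zero_div, Real.exp_zero, mul_one] at this
  rw [Real.exp_neg]
  rw [← le_div_iff₀ (Real.exp_pos _)] at this
  simpa [div_eq_mul_inv] using this

lemma sin_pow_prod (n : ℕ) :
    ((n:ℝ)+1) * ((∫ x in (0:ℝ)..π, sin x ^ n) * (∫ x in (0:ℝ)..π, sin x ^ (n+1))) = 2 * π := by
  induction n with
  | zero => simp [integral_sin]; ring
  | succ m ih =>
    have h := integral_sin_pow (a := (0:ℝ)) (b := π) m
    simp only [Real.sin_zero, Real.sin_pi, zero_pow (Nat.succ_ne_zero m), ne_eq] at h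
    push_cast
    rw [show m + 1 + 1 = m + 2 from rfl, h]
    push_cast at ih ⊢
    have hm : ((m:ℝ)+2) ≠ 0 := by positivity
    field_simp at ih ⊢
    nlinarith [ih]

lemma sin_pow_lower (n : ℕ) :
    Real.sqrt (2 * π / ((n:ℝ)+1)) ≤ ∫ x in (0:ℝ)..π, sin x ^ n := by
  have hpos := integral_sin_pow_pos n
  have hle := integral_sin_pow_succ_le n
  have hprod := sin_pow_prod n
  have h1 : 2 * π / ((n:ℝ)+1) ≤ (∫ x in (0:ℝ)..π, sin x ^ n)^2 := by
    have hn : (0:ℝ) < (n:ℝ)+1 := by positivity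
    rw [div_le_iff₀ hn]
    nlinarith [mul_nonneg (mul_nonneg hn.le hpos.le) (sub_nonneg.2 hle)]
  calc Real.sqrt (2 * π / ((n:ℝ)+1)) ≤ Real.sqrt ((∫ x in (0:ℝ)..π, sin x ^ n)^2) :=
        Real.sqrt_le_sqrt h1
    _ = _ := by rw [Real.sqrt_sq hpos.le]

set_option maxHeartbeats 1000000 in
/-- Quantitative cap-volume estimate behind Lévy's concentration of measure on `S^n(1)`:
for `n ≥ 2` and `ε ∈ [0, π/2]`,
`(∫_0^{π/2+ε} sin^n t dt) / (∫_0^π sin^n t dt) ≥ 1 - √(π/8) e^{-ε²(n-1)/2}`. -/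
theorem sin_power_cap_ratio_lower_bound (n : ℕ) (hn : 2 ≤ n) (ε : ℝ)
    (hε : ε ∈ Set.Icc (0 : ℝ) (π / 2)) :
    (∫ t in (0 : ℝ)..(π / 2 + ε), Real.sin t ^ n) / (∫ t in (0 : ℝ)..π, Real.sin t ^ n)
      ≥ 1 - Real.sqrt (π / 8) * Real.exp (-ε ^ 2 * ((n : ℝ) - 1) / 2) := by
  obtain ⟨hε0, hε2⟩ := hε
  set I := ∫ t in (0:ℝ)..π, Real.sin t ^ n with hIdef
  set T := ∫ t in (π/2+ε : ℝ)..π, Real.sin t ^ n with hTdef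
  set E := Real.exp (-ε ^ 2 * ((n : ℝ) - 1) / 2) with hEdef
  set c : ℝ := (n:ℝ)/2 with hcdef
  have hn2 : (2:ℝ) ≤ (n:ℝ) := by exact_mod_cast hn
  have hc : 0 < c := by rw [hcdef]; linarith
  have hIpos : 0 < I := integral_sin_pow_pos n
  have hEpos : 0 < E := Real.exp_pos _
  have hintg : ∀ a b : ℝ, IntervalIntegrable (fun t => Real.sin t ^ n) volume a b :=
    fun a b => (Real.continuous_sin.pow n).intervalIntegrable a b
  -- split
  have hsplit : (∫ t in (0:ℝ)..(π/2+ε), Real.sin t ^ n) = I - T := by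
    rw [hIdef, hTdef, ← integral_add_adjacent_intervals (hintg 0 (π/2+ε)) (hintg (π/2+ε) π)]
    ring
  -- change of variables to cos
  have hT : T = ∫ s in ε..(π/2), Real.cos s ^ n := by
    have h := integral_comp_add_right (a := ε) (b := π/2)
      (fun t => Real.sin t ^ n) (π/2)
    simp only [Real.sin_add_pi_div_two] at h
    have h2 : T = ∫ x in (ε+π/2 : ℝ)..(π/2+π/2), Real.sin x ^ n := by
      rw [hTdef]; congr 1 <;> ring
    rw [h2]; exact h.symm
  -- bound T by gaussian integral
  have hTbound : T ≤ Real.exp (-(c*ε^2)) * (Real.sqrt (π/c) / 2) := by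
    have step1 : T ≤ ∫ s in ε..(π/2), Real.exp (-c * s^2) := by
      rw [hT]
      apply integral_mono_on hε2
      · exact (Real.continuous_cos.pow n).intervalIntegrable _ _
      · exact (Continuous.intervalIntegrable (by continuity) _ _)
      · intro s hs
        have hs0 : 0 ≤ s := le_trans hε0 hs.1
        have hcos : Real.cos s ^ n ≤ Real.exp (-(s^2/2)) ^ n :=
          pow_le_pow_left₀ (Real.cos_nonneg_of_mem_Icc ⟨by linarith [pi_div_two_pos], hs.2⟩)
            (cos_le_exp_aux ⟨hs0, hs.2⟩) n
        calc Real.cos s ^ n ≤ Real.exp (-(s^2/2)) ^ n := hcos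
          _ = Real.exp (-c * s^2) := by
            rw [← Real.exp_nat_mul]; congr 1; rw [hcdef]; ring
    have step2 : (∫ s in ε..(π/2), Real.exp (-c * s^2))
        = ∫ u in (0:ℝ)..(π/2-ε), Real.exp (-c * (ε+u)^2) := by
      have h := integral_comp_add_left (a := (0:ℝ)) (b := π/2-ε)
        (fun s => Real.exp (-c * s^2)) ε
      rw [h]; congr 1 <;> ring
    have step3 : (∫ u in (0:ℝ)..(π/2-ε), Real.exp (-c * (ε+u)^2))
        ≤ ∫ u in (0:ℝ)..(π/2-ε), Real.exp (-(c*ε^2)) * Real.exp (-c * u^2) := by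
      apply integral_mono_on (by linarith)
      · exact (Continuous.intervalIntegrable (by continuity) _ _)
      · exact (Continuous.intervalIntegrable (by continuity) _ _)
      · intro u hu
        rw [← Real.exp_add, Real.exp_le_exp]
        nlinarith [mul_nonneg (mul_nonneg hc.le hε0) hu.1]
    have step4 : (∫ u in (0:ℝ)..(π/2-ε), Real.exp (-(c*ε^2)) * Real.exp (-c * u^2))
        = Real.exp (-(c*ε^2)) * ∫ u in (0:ℝ)..(π/2-ε), Real.exp (-c * u^2) :=
      integral_const_mul _ _
    have step5 : (∫ u in (0:ℝ)..(π/2-ε), Real.exp (-c * u^2)) ≤ Real.sqrt (π/c) / 2 := by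
      rw [← integral_gaussian_Ioi c]
      rw [intervalIntegral.integral_of_le (by linarith)]
      apply setIntegral_mono_set ((integrable_exp_neg_mul_sq hc).integrableOn)
        (Filter.Eventually.of_forall fun x => (Real.exp_pos _).le)
        (HasSubset.Subset.eventuallyLE Ioc_subset_Ioi_self)
    calc T ≤ _ := step1
      _ = _ := step2
      _ ≤ _ := step3
      _ = _ := step4
      _ ≤ Real.exp (-(c*ε^2)) * (Real.sqrt (π/c) / 2) := by
        exact mul_le_mul_of_nonneg_left step5 (Real.exp_pos _).le
  have hTnonneg : 0 ≤ T := by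
    rw [hT]
    apply intervalIntegral.integral_nonneg hε2
    intro s hs
    exact pow_nonneg (Real.cos_nonneg_of_mem_Icc
      ⟨by linarith [pi_div_two_pos, hε0, hs.1], hs.2⟩) n
  have hB : Real.sqrt (2*π/((n:ℝ)+1)) ≤ I := sin_pow_lower n
  have hBpos : 0 < Real.sqrt (2*π/((n:ℝ)+1)) :=
    Real.sqrt_pos.mpr (by positivity)
  -- key numeric inequality
  have hkey : Real.sqrt (π/c) / 2 / Real.sqrt (2*π/((n:ℝ)+1)) ≤ Real.sqrt (π/8) := by
    have e1 : Real.sqrt (π/c) / 2 = Real.sqrt (π/(4*c)) := by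
      have h4 : π/(4*c) = (Real.sqrt (π/c)/2)^2 := by
        rw [div_pow, Real.sq_sqrt (by positivity)]; ring
      rw [h4, Real.sqrt_sq (by positivity)]
    rw [e1, div_le_iff₀ hBpos, ← Real.sqrt_mul (by positivity)]
    apply Real.sqrt_le_sqrt
    have hA : π/(4*c) = π/(2*(n:ℝ)) := by rw [hcdef]; ring_nf
    have hBq : π/8 * (2*π/((n:ℝ)+1)) = π*π/(4*((n:ℝ)+1)) := by
      field_simp; ring
    rw [hA, hBq, div_le_div_iff₀ (by positivity) (by positivity)]
    nlinarith [mul_nonneg (mul_nonneg pi_pos.le (by linarith : (0:ℝ) ≤ (n:ℝ)))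
      (sub_nonneg.2 pi_gt_three.le), mul_nonneg pi_pos.le (sub_nonneg.2 hn2)]
  -- ratio bound
  have hratio : T / I ≤ Real.sqrt (π/8) * E := by
    have h1 : T / I ≤ (Real.exp (-(c*ε^2)) * (Real.sqrt (π/c) / 2)) /
        Real.sqrt (2*π/((n:ℝ)+1)) :=
      div_le_div₀ (mul_nonneg (Real.exp_pos _).le (by positivity)) hTbound hBpos hB
    have hexp : Real.exp (-(c*ε^2)) = E * Real.exp (-(ε^2/2)) := by
      rw [hEdef, ← Real.exp_add]; congr 1; rw [hcdef]; ring
    calc T / I ≤ _ := h1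
      _ = E * (Real.exp (-(ε^2/2)) * (Real.sqrt (π/c) / 2 / Real.sqrt (2*π/((n:ℝ)+1)))) := by
        rw [hexp]; ring
      _ ≤ E * (1 * Real.sqrt (π/8)) := by
        apply mul_le_mul_of_nonneg_left _ hEpos.le
        apply mul_le_mul (Real.exp_le_one_iff.mpr (by nlinarith)) hkey
          (by positivity) (by norm_num)
      _ = Real.sqrt (π/8) * E := by ring
  rw [hsplit, ge_iff_le, sub_div, div_self hIpos.ne']
  linarith [hratio]
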